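/- For every Λ ≥ 0, every R > 0, and every f ∈ (0, ∞)^{L_R*}, one has ∑_{p∈L_R*} Q^{NR}_p[f]·(−1/f_p) ≤ 0, with equality if and only if 1/f_{p₁} = 1/f_{p₂} + 1/f_{p₃} for all p₁, p₂, p₃ ∈ L_R* with p₁ = p₂ + p₃ and | |p₂| + |p₃| − |p₁| | ≤ Λ. In particular, L(f) = −∑_{p∈L_R*} log f_p is nonincreasing along every positive solution of the discrete near-resonance acoustic kinetic system. -/

import Mathlib

open scoped BigOperators Classical

/-- Euclidean norm of a point of the integer lattice `ℤ³`. -/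
noncomputable def enorm3 (p : Fin 3 → ℤ) : ℝ := Real.sqrt (∑ i, ((p i : ℝ))^2)

/-- The truncated lattice `L_R* = {p ∈ ℤ³ : 0 < |p| < R}` (as a finite set). -/
noncomputable def latticeBall (R : ℝ) : Finset (Fin 3 → ℤ) :=
  (Finset.Icc (fun _ => (-⌈R⌉ : ℤ)) (fun _ => (⌈R⌉ : ℤ))).filter
    (fun p => 0 < enorm3 p ∧ enorm3 p < R)

/-- Right-hand side of the discrete exact-resonance acoustic wave kinetic system, with
kernel `V_{p₁,p₂,p₃} = |p₁||p₂||p₃|` and phonon dispersion `ω(p) = |p|`. -/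
noncomputable def Qres (R : ℝ) (f : (Fin 3 → ℤ) → ℝ) (p1 : Fin 3 → ℤ) : ℝ :=
  (∑ p2 ∈ latticeBall R, ∑ p3 ∈ latticeBall R,
      if p1 = p2 + p3 ∧ enorm3 p1 = enorm3 p2 + enorm3 p3 then
        enorm3 p1 * enorm3 p2 * enorm3 p3 *
          (f p2 * f p3 - f p1 * (f p2 + f p3)) else 0)
  - 2 * ∑ p2 ∈ latticeBall R, ∑ p3 ∈ latticeBall R,
      if p3 = p1 + p2 ∧ enorm3 p3 = enorm3 p1 + enorm3 p2 then
        enorm3 p1 * enorm3 p2 * enorm3 p3 *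
          (f p1 * f p2 - f p3 * (f p1 + f p2)) else 0

/-- Right-hand side of the discrete near-resonance acoustic wave kinetic system with
resonance broadening `Λ`. -/
noncomputable def QNR (R Λ : ℝ) (f : (Fin 3 → ℤ) → ℝ) (p1 : Fin 3 → ℤ) : ℝ :=
  (∑ p2 ∈ latticeBall R, ∑ p3 ∈ latticeBall R,
      if p1 = p2 + p3 ∧ |enorm3 p1 - enorm3 p2 - enorm3 p3| ≤ Λ then
        enorm3 p1 * enorm3 p2 * enorm3 p3 *
          (f p2 * f p3 - f p1 * (f p2 + f p3)) else 0)
  - 2 * ∑ p2 ∈ latticeBall R, ∑ p3 ∈ latticeBall R,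
      if p3 = p1 + p2 ∧ |enorm3 p3 - enorm3 p1 - enorm3 p2| ≤ Λ then
        enorm3 p1 * enorm3 p2 * enorm3 p3 *
          (f p1 * f p2 - f p3 * (f p1 + f p2)) else 0

lemma enorm3_nonneg (p : Fin 3 → ℤ) : 0 ≤ enorm3 p := Real.sqrt_nonneg _

lemma mem_latticeBall_pos {R : ℝ} {p : Fin 3 → ℤ} (hp : p ∈ latticeBall R) :
    0 < enorm3 p := ((Finset.mem_filter.mp hp).2).1

private lemma sum_rot {α : Type*} (s : Finset α) (g : α → α → α → ℝ) :
    ∑ x ∈ s, ∑ y ∈ s, ∑ z ∈ s, g x y z = ∑ x ∈ s, ∑ y ∈ s, ∑ z ∈ s, g z x y := by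
  rw [Finset.sum_comm]
  exact Finset.sum_congr rfl fun y _ => Finset.sum_comm

private lemma sum_swap_inner {α : Type*} (s : Finset α) (g : α → α → α → ℝ) :
    ∑ x ∈ s, ∑ y ∈ s, ∑ z ∈ s, g x y z = ∑ x ∈ s, ∑ y ∈ s, ∑ z ∈ s, g x z y :=
  Finset.sum_congr rfl fun _ _ => Finset.sum_comm

private lemma triple_sum_sub {α : Type*} (s : Finset α) (u v : α → α → α → ℝ) :
    ((∑ x ∈ s, ∑ y ∈ s, ∑ z ∈ s, u x y z) - ∑ x ∈ s, ∑ y ∈ s, ∑ z ∈ s, v x y z)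
      = ∑ x ∈ s, ∑ y ∈ s, ∑ z ∈ s, (u x y z - v x y z) := by
  simp only [← Finset.sum_sub_distrib]

lemma key_identity (R Λ : ℝ) (f : (Fin 3 → ℤ) → ℝ)
    (hf : ∀ p ∈ latticeBall R, 0 < f p) :
    ∑ p ∈ latticeBall R, QNR R Λ f p * (-(1 / f p)) =
    ∑ a ∈ latticeBall R, ∑ b ∈ latticeBall R, ∑ c ∈ latticeBall R,
      (if a = b + c ∧ |enorm3 a - enorm3 b - enorm3 c| ≤ Λ then
        -(enorm3 a * enorm3 b * enorm3 c * (f a * f b * f c) *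
          (1 / f a - 1 / f b - 1 / f c) ^ 2) else 0) := by
  classical
  set B := latticeBall R with hB
  set W : (Fin 3 → ℤ) → (Fin 3 → ℤ) → (Fin 3 → ℤ) → ℝ := fun a b c =>
    if a = b + c ∧ |enorm3 a - enorm3 b - enorm3 c| ≤ Λ then
      enorm3 a * enorm3 b * enorm3 c * (f b * f c - f a * (f b + f c)) else 0 with hW
  have hWsym : ∀ a b c, W a b c = W a c b := by
    intro a b c
    simp only [hW]
    refine if_congr ?_ (by ring) rfl
    rw [add_comm c b, sub_right_comm]
  have hQ : ∀ p1, QNR R Λ f p1 =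
      (∑ p2 ∈ B, ∑ p3 ∈ B, W p1 p2 p3) - 2 * ∑ p2 ∈ B, ∑ p3 ∈ B, W p3 p1 p2 := by
    intro p1
    unfold QNR
    congr 1
    rw [mul_right_inj' (two_ne_zero)]
    refine Finset.sum_congr rfl fun p2 _ => Finset.sum_congr rfl fun p3 _ => ?_
    simp only [hW]
    exact if_congr Iff.rfl (by ring) rfl
  have step1 : ∑ p ∈ B, QNR R Λ f p * (-(1 / f p)) =
      (∑ a ∈ B, ∑ b ∈ B, ∑ c ∈ B, W a b c * (-(1 / f a)))
      - 2 * ∑ a ∈ B, ∑ b ∈ B, ∑ c ∈ B, W c a b * (-(1 / f a)) := by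
    rw [Finset.mul_sum, ← Finset.sum_sub_distrib]
    refine Finset.sum_congr rfl fun a _ => ?_
    rw [hQ a]
    simp only [sub_mul, mul_assoc, Finset.sum_mul]
  have hrot : (∑ a ∈ B, ∑ b ∈ B, ∑ c ∈ B, W c a b * (-(1 / f a)))
      = ∑ a ∈ B, ∑ b ∈ B, ∑ c ∈ B, W a b c * (-(1 / f b)) :=
    (sum_rot B _).trans (sum_rot B _)
  have hsym : (∑ a ∈ B, ∑ b ∈ B, ∑ c ∈ B, W a b c * (-(1 / f b)))
      = ∑ a ∈ B, ∑ b ∈ B, ∑ c ∈ B, W a b c * (-(1 / f c)) := by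
    rw [sum_swap_inner B (fun a b c => W a b c * (-(1 / f b)))]
    exact Finset.sum_congr rfl fun a _ => Finset.sum_congr rfl fun b _ =>
      Finset.sum_congr rfl fun c _ => by rw [hWsym a c b]
  rw [step1, hrot, two_mul]
  nth_rewrite 2 [hsym]
  rw [sub_add_eq_sub_sub, triple_sum_sub, triple_sum_sub]
  refine Finset.sum_congr rfl fun a ha => Finset.sum_congr rfl fun b hb =>
    Finset.sum_congr rfl fun c hc => ?_
  have ha' : f a ≠ 0 := ne_of_gt (hf a ha)
  have hb' : f b ≠ 0 := ne_of_gt (hf b hb)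
  have hc' : f c ≠ 0 := ne_of_gt (hf c hc)
  simp only [hW]
  split_ifs with h
  · field_simp
    ring
  · ring

private lemma triple_zero {α : Type*} (s : Finset α) (g : α → α → α → ℝ)
    (hg : ∀ a ∈ s, ∀ b ∈ s, ∀ c ∈ s, g a b c ≤ 0) :
    (∑ a ∈ s, ∑ b ∈ s, ∑ c ∈ s, g a b c = 0) ↔ ∀ a ∈ s, ∀ b ∈ s, ∀ c ∈ s, g a b c = 0 := by
  have h1 : ∀ a ∈ s, (∑ b ∈ s, ∑ c ∈ s, g a b c) ≤ 0 := fun a ha =>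
    Finset.sum_nonpos fun b hb => Finset.sum_nonpos fun c hc => hg a ha b hb c hc
  constructor
  · intro h a ha b hb c hc
    have h2 := (Finset.sum_eq_zero_iff_of_nonpos h1).mp h a ha
    have h3 := (Finset.sum_eq_zero_iff_of_nonpos
      (fun b hb => Finset.sum_nonpos fun c hc => hg a ha b hb c hc)).mp h2 b hb
    exact (Finset.sum_eq_zero_iff_of_nonpos (fun c hc => hg a ha b hb c hc)).mp h3 c hc
  · intro h
    exact Finset.sum_eq_zero fun a ha => Finset.sum_eq_zero fun b hb =>
      Finset.sum_eq_zero fun c hc => h a ha b hb c hc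

private lemma term_nonpos (R Λ) (f : (Fin 3 → ℤ) → ℝ) (hf : ∀ p ∈ latticeBall R, 0 < f p) :
    ∀ a ∈ latticeBall R, ∀ b ∈ latticeBall R, ∀ c ∈ latticeBall R,
      (if a = b + c ∧ |enorm3 a - enorm3 b - enorm3 c| ≤ Λ then
        -(enorm3 a * enorm3 b * enorm3 c * (f a * f b * f c) *
          (1 / f a - 1 / f b - 1 / f c) ^ 2) else 0) ≤ 0 := by
  intro a ha b hb c hc
  split_ifs with h
  · have hN : 0 ≤ enorm3 a * enorm3 b * enorm3 c * (f a * f b * f c) *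
        (1 / f a - 1 / f b - 1 / f c) ^ 2 := by
      apply mul_nonneg _ (sq_nonneg _)
      apply mul_nonneg _ (le_of_lt (mul_pos (mul_pos (hf a ha) (hf b hb)) (hf c hc)))
      exact mul_nonneg (mul_nonneg (enorm3_nonneg a) (enorm3_nonneg b)) (enorm3_nonneg c)
    linarith
  · exact le_refl 0

lemma dissipation_nonpos (R Λ : ℝ) (f : (Fin 3 → ℤ) → ℝ)
    (hf : ∀ p ∈ latticeBall R, 0 < f p) :
    ∑ p ∈ latticeBall R, QNR R Λ f p * (-(1 / f p)) ≤ 0 := by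
  rw [key_identity R Λ f hf]
  exact Finset.sum_nonpos fun a ha => Finset.sum_nonpos fun b hb =>
    Finset.sum_nonpos fun c hc => term_nonpos R Λ f hf a ha b hb c hc

/-- Lyapunov dissipation for the discrete near-resonance acoustic kinetic system:
`∑_{p∈L_R*} Q^{NR}_p[f]·(−1/f_p) ≤ 0` on the positive orthant, with equality iff
`1/f_{p₁} = 1/f_{p₂} + 1/f_{p₃}` for all near-resonant triples; in particular
`L(f) = −∑_p log f_p` is nonincreasing along every positive solution. -/
theorem lyapunov_dissipation_near_resonance (R Λ : ℝ) (hR : 0 < R) (hΛ : 0 ≤ Λ)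
    (f : (Fin 3 → ℤ) → ℝ) (hf : ∀ p ∈ latticeBall R, 0 < f p) :
    (∑ p ∈ latticeBall R, QNR R Λ f p * (-(1 / f p)) ≤ 0) ∧
    ((∑ p ∈ latticeBall R, QNR R Λ f p * (-(1 / f p)) = 0) ↔
      ∀ p1 ∈ latticeBall R, ∀ p2 ∈ latticeBall R, ∀ p3 ∈ latticeBall R,
        p1 = p2 + p3 → |enorm3 p2 + enorm3 p3 - enorm3 p1| ≤ Λ →
          1 / f p1 = 1 / f p2 + 1 / f p3) ∧
    (∀ g : ℝ → (Fin 3 → ℤ) → ℝ,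
      (∀ p ∈ latticeBall R, ∀ t : ℝ, 0 ≤ t →
        HasDerivAt (fun s => g s p) (QNR R Λ (g t) p) t) →
      (∀ p ∈ latticeBall R, ∀ t : ℝ, 0 ≤ t → 0 < g t p) →
      ∀ s t : ℝ, 0 ≤ s → s ≤ t →
        -∑ p ∈ latticeBall R, Real.log (g t p) ≤
          -∑ p ∈ latticeBall R, Real.log (g s p)) := by
  refine ⟨dissipation_nonpos R Λ f hf, ?_, ?_⟩
  · -- equality characterization
    rw [key_identity R Λ f hf, triple_zero _ _ (term_nonpos R Λ f hf)]
    constructor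
    · intro h p1 h1 p2 h2 p3 h3 heq hres
      have hres' : |enorm3 p1 - enorm3 p2 - enorm3 p3| ≤ Λ := by
        rw [sub_sub, abs_sub_comm]; exact hres
      have h0 := h p1 h1 p2 h2 p3 h3
      rw [if_pos ⟨heq, hres'⟩, neg_eq_zero] at h0
      set D := 1 / f p1 - 1 / f p2 - 1 / f p3 with hD
      have hDz : D = 0 := by
        by_contra hne
        have hpos : 0 < enorm3 p1 * enorm3 p2 * enorm3 p3 * (f p1 * f p2 * f p3) * D ^ 2 := by
          refine mul_pos (mul_pos ?_ (mul_pos (mul_pos (hf p1 h1) (hf p2 h2)) (hf p3 h3))) ?_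
          · exact mul_pos (mul_pos (mem_latticeBall_pos h1) (mem_latticeBall_pos h2))
              (mem_latticeBall_pos h3)
          · exact lt_of_le_of_ne (sq_nonneg D) (Ne.symm (pow_ne_zero 2 hne))
        rw [h0] at hpos
        exact lt_irrefl 0 hpos
      have := hDz
      rw [hD] at this
      linarith
    · intro h a ha b hb c hc
      split_ifs with hcond
      · obtain ⟨heq, hres⟩ := hcond
        have hres' : |enorm3 b + enorm3 c - enorm3 a| ≤ Λ := by
          rw [abs_sub_comm, ← sub_sub]; exact hres
        have hEq := h a ha b hb c hc heq hres'
        have hz : 1 / f a - 1 / f b - 1 / f c = 0 := by rw [hEq]; ring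
        rw [hz]
        ring
      · rfl
  · -- monotonicity of the Lyapunov functional
    intro g hderiv hpos s t hs hst
    set B := latticeBall R with hB
    set F : ℝ → ℝ := fun u => -∑ p ∈ B, Real.log (g u p) with hF
    have hFd : ∀ u : ℝ, 0 ≤ u →
        HasDerivAt F (-(∑ p ∈ B, QNR R Λ (g u) p / g u p)) u := by
      intro u hu
      refine HasDerivAt.neg ?_
      refine HasDerivAt.fun_sum fun p hp => ?_
      have h1 := hderiv p hp u hu
      have h2 := (Real.hasDerivAt_log (ne_of_gt (hpos p hp u hu))).comp u h1
      convert h2 using 1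
      · rfl
      · rfl
      rw [div_eq_inv_mul]
    have hval : ∀ u : ℝ, 0 ≤ u →
        -(∑ p ∈ B, QNR R Λ (g u) p / g u p) ≤ 0 := by
      intro u hu
      have heq : -(∑ p ∈ B, QNR R Λ (g u) p / g u p)
          = ∑ p ∈ B, QNR R Λ (g u) p * (-(1 / g u p)) := by
        rw [← Finset.sum_neg_distrib]
        exact Finset.sum_congr rfl fun p _ => by ring
      rw [heq]
      exact dissipation_nonpos R Λ (g u) (fun p hp => hpos p hp u hu)
    have hanti : AntitoneOn F (Set.Ici (0:ℝ)) := by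
      refine antitoneOn_of_deriv_nonpos (convex_Ici 0) ?_ ?_ ?_
      · intro u hu
        exact (hFd u hu).continuousAt.continuousWithinAt
      · intro x hx
        rw [interior_Ici] at hx
        exact (hFd x (le_of_lt hx)).differentiableAt.differentiableWithinAt
      · intro x hx
        rw [interior_Ici] at hx
        rw [(hFd x (le_of_lt hx)).deriv]
        exact hval x (le_of_lt hx)
    exact hanti (Set.mem_Ici.mpr hs) (Set.mem_Ici.mpr (hs.trans hst)) hst
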